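/- arXiv:1109.4731 — 5 statements merged into one kernel-verified Lean document; each statement's English description precedes it below -/
import Mathlib

section
/- In a finite simple graph G on vertex set V, a set B ⊆ V is NOT c-accessing if and only if there exists C ⊆ V \ B with B ⊆ Odd(C). -/
set_option linter.unusedSectionVars false

variable {V : Type*} [Fintype V] [DecidableEq V]

def oddNbhd (G : SimpleGraph V) [DecidableRel G.Adj] (D : Finset V) : Finset V :=
  Finset.univ.filter fun v => Odd (G.neighborFinset v ∩ D).card

def cAccessing (G : SimpleGraph V) [DecidableRel G.Adj] (B : Finset V) : Prop :=
  ∃ D ⊆ B, Odd D.card ∧ oddNbhd G D ⊆ B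

namespace CAux

open Finset LinearMap

abbrev F := ZMod 2

/-- adjacency operator -/
def phi (G : SimpleGraph V) [DecidableRel G.Adj] : (V → F) →ₗ[F] (V → F) where
  toFun x := fun v => ∑ u ∈ G.neighborFinset v, x u
  map_add' x y := by ext v; simp [Finset.sum_add_distrib]
  map_smul' c x := by ext v; simp [Finset.mul_sum]

/-- dot product bilinear form -/
def bf : LinearMap.BilinForm F (V → F) :=
  LinearMap.mk₂ F (fun x y => ∑ v, x v * y v)
    (fun x y z => by simp [add_mul, Finset.sum_add_distrib])
    (fun c x y => by simp [Finset.mul_sum, mul_assoc])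
    (fun x y z => by simp [mul_add, Finset.sum_add_distrib])
    (fun c x y => by simp [Finset.mul_sum, mul_left_comm])

lemma bf_apply (x y : V → F) : bf x y = ∑ v, x v * y v := rfl

lemma bf_comm (x y : V → F) : bf x y = bf y x := by
  simp [bf_apply, mul_comm]

lemma bf_single (v : V) (x : V → F) : bf (Pi.single v 1) x = x v := by
  simp [bf_apply, Pi.single_apply]

lemma bf_nondeg : (bf (V := V)).Nondegenerate := by
  refine ⟨?_, fun x hx => ?_⟩
  · intro x hx
    funext v
    have := hx (Pi.single v 1)
    rw [bf_comm, bf_single] at this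
    simpa using this
  · funext v
    have := hx (Pi.single v 1)
    rw [bf_single] at this
    simpa using this

lemma bf_refl : (bf (V := V)).IsRefl := fun x y h => by rwa [bf_comm]

lemma phi_selfadj (G : SimpleGraph V) [DecidableRel G.Adj] (x y : V → F) :
    bf (phi G x) y = bf x (phi G y) := by
  simp only [bf_apply, phi, LinearMap.coe_mk, AddHom.coe_mk]
  simp only [SimpleGraph.neighborFinset_eq_filter, Finset.sum_mul, Finset.mul_sum,
    Finset.sum_filter]
  rw [Finset.sum_comm]
  refine Finset.sum_congr rfl fun v _ => Finset.sum_congr rfl fun u _ => ?_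
  by_cases h : G.Adj u v
  · rw [if_pos h, if_pos ((G.adj_comm u v).mp h)]
  · rw [if_neg h, if_neg fun h' => h ((G.adj_comm u v).mpr h')]
    ring

/-- functions vanishing on `s` -/
def supd (s : Set V) : Submodule F (V → F) where
  carrier := {x | ∀ v ∈ s, x v = 0}
  add_mem' hx hy v hv := by simp [hx v hv, hy v hv]
  zero_mem' := fun v hv => rfl
  smul_mem' c x hx v hv := by simp [hx v hv]

lemma mem_supd {s : Set V} {x : V → F} : x ∈ supd s ↔ ∀ v ∈ s, x v = 0 := Iff.rfl

lemma orth_supd (s : Set V) : bf.orthogonal (supd s) = supd sᶜ := by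
  ext x
  constructor
  · intro h v hv
    have hs : (Pi.single v 1 : V → F) ∈ supd s := by
      intro u hu
      exact Pi.single_eq_of_ne (fun e => hv (by rwa [← e])) 1
    have := h (Pi.single v 1) hs
    rwa [bf_single] at this
  · intro hx n hn
    rw [bf_apply]
    refine Finset.sum_eq_zero fun v _ => ?_
    by_cases hv : v ∈ s
    · rw [hn v hv, zero_mul]
    · rw [hx v hv, mul_zero]

lemma orth_sup (P Q : Submodule F (V → F)) :
    bf.orthogonal (P ⊔ Q) = bf.orthogonal P ⊓ bf.orthogonal Q := by
  ext x
  simp only [Submodule.mem_inf, LinearMap.BilinForm.mem_orthogonal_iff]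
  constructor
  · exact fun h => ⟨fun n hn => h n (Submodule.mem_sup_left hn),
      fun n hn => h n (Submodule.mem_sup_right hn)⟩
  · rintro ⟨h1, h2⟩ n hn
    obtain ⟨p, hp, q, hq, rfl⟩ := Submodule.mem_sup.mp hn
    rw [LinearMap.BilinForm.add_left, h1 p hp, h2 q hq, add_zero]

lemma orth_map (G : SimpleGraph V) [DecidableRel G.Adj] (P : Submodule F (V → F)) :
    bf.orthogonal (P.map (phi G)) = Submodule.comap (phi G) (bf.orthogonal P) := by
  ext x
  simp only [Submodule.mem_comap, LinearMap.BilinForm.mem_orthogonal_iff]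
  constructor
  · intro h y hy
    have := h (phi G y) (Submodule.mem_map_of_mem hy)
    rw [phi_selfadj] at this
    exact this
  · rintro h n hn
    obtain ⟨y, hy, rfl⟩ := Submodule.mem_map.mp hn
    rw [phi_selfadj]
    exact h y hy

/-- indicator function -/
def ind (D : Finset V) : V → F := fun v => if v ∈ D then 1 else 0

lemma sum_ind (D : Finset V) : ∑ v, ind D v = (D.card : F) := by
  simp [ind, Finset.sum_boole, Finset.filter_univ_mem]

lemma phi_ind (G : SimpleGraph V) [DecidableRel G.Adj] (C : Finset V) (v : V) :
    phi G (ind C) v = ((G.neighborFinset v ∩ C).card : F) := by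
  simp [phi, ind, Finset.sum_boole, Finset.filter_mem_eq_inter]

lemma odd_iff_cast (n : ℕ) : Odd n ↔ (n : F) = 1 := by
  rw [Nat.odd_iff, ← ZMod.natCast_mod n 2]
  rcases Nat.mod_two_eq_zero_or_one n with h | h <;> rw [h] <;> simp

lemma zmod2 : ∀ a : F, a = 0 ∨ a = 1 := by decide

lemma not_odd_iff_cast (n : ℕ) : ¬ Odd n ↔ (n : F) = 0 := by
  rw [odd_iff_cast]
  rcases zmod2 (n : F) with h | h <;> simp [h]

lemma eq_ind (x : V → F) : x = ind (Finset.univ.filter fun v => x v = 1) := by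
  funext v
  rcases zmod2 (x v) with h | h <;> simp [ind, h]

end CAux

open CAux Finset

theorem not_cAccessing_iff (G : SimpleGraph V) [DecidableRel G.Adj] (B : Finset V) :
    ¬ cAccessing G B ↔ ∃ C ⊆ Bᶜ, B ⊆ oddNbhd G C := by
  classical
  set P : Submodule F (V → F) := supd (↑B : Set V) with hP
  set M : Submodule F (V → F) := supd ((↑B : Set V)ᶜ) with hM
  set U : Submodule F (V → F) := M ⊓ Submodule.comap (phi G) M with hU
  set S : Submodule F (V → F) := P ⊔ P.map (phi G) with hS
  have horthS : bf.orthogonal S = U := by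
    rw [hS, orth_sup, orth_supd, orth_map, orth_supd]
  have horthU : bf.orthogonal U = S := by
    rw [← horthS, LinearMap.BilinForm.orthogonal_orthogonal bf_nondeg bf_refl]
  -- step A : ¬ cAccessing ↔ ∀ x ∈ U, ∑ x = 0
  have stepA : ¬ cAccessing G B ↔ ∀ x ∈ U, ∑ v, x v = 0 := by
    constructor
    · intro h x hx
      rcases zmod2 (∑ v, x v) with hs | hs
      · exact hs
      exfalso; apply h
      set D : Finset V := Finset.univ.filter fun v => x v = 1 with hD
      have hxD : x = ind D := eq_ind x
      have hDB : D ⊆ B := by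
        intro v hv
        by_contra hvB
        have h0 : x v = 0 := hx.1 v hvB
        have h1 : x v = 1 := (Finset.mem_filter.mp hv).2
        rw [h0] at h1; exact zero_ne_one h1
      refine ⟨D, hDB, ?_, ?_⟩
      · rw [odd_iff_cast, ← sum_ind, ← hxD]; exact hs
      · intro v hv
        by_contra hvB
        have h0 : phi G x v = 0 := hx.2 v hvB
        have hOdd : Odd (G.neighborFinset v ∩ D).card := by
          simpa [oddNbhd] using hv
        rw [odd_iff_cast] at hOdd
        rw [hxD, phi_ind, hOdd] at h0
        exact one_ne_zero h0
    · rintro h ⟨D, hDB, hodd, hsub⟩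
      have hxM : ind D ∈ M := by
        intro v hv
        have : v ∉ D := fun hvD => hv (hDB hvD)
        simp [ind, this]
      have hxU : ind D ∈ U := by
        refine ⟨hxM, ?_⟩
        intro v hv
        rw [phi_ind]
        rw [← not_odd_iff_cast]
        intro hOdd
        exact hv (hsub (by simp [oddNbhd, hOdd]))
      have h0 := h _ hxU
      rw [sum_ind] at h0
      rw [odd_iff_cast] at hodd
      rw [hodd] at h0
      exact one_ne_zero h0
  rw [stepA]
  -- step B : ∀ x ∈ U, ∑ x = 0 ↔ 1 ∈ orth U = S
  have stepB : (∀ x ∈ U, ∑ v, x v = 0) ↔ (fun _ => 1 : V → F) ∈ S := by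
    rw [← horthU]
    constructor
    · intro h n hn
      rw [bf_apply]
      simpa using h n hn
    · intro h x hx
      have := h x hx
      rw [bf_apply] at this
      simpa using this
  rw [stepB, hS]
  -- step D
  constructor
  · intro h
    obtain ⟨p, hp, q, hq, hpq⟩ := Submodule.mem_sup.mp h
    obtain ⟨y, hy, rfl⟩ := Submodule.mem_map.mp hq
    set C : Finset V := Finset.univ.filter fun v => y v = 1 with hC
    have hyC : y = ind C := eq_ind y
    refine ⟨C, ?_, ?_⟩
    · intro v hv
      rw [Finset.mem_compl]
      intro hvB
      have h0 : y v = 0 := hy v hvB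
      have h1 : y v = 1 := (Finset.mem_filter.mp hv).2
      rw [h0] at h1; exact zero_ne_one h1
    · intro v hv
      have hpv : p v = 0 := hp v hv
      have : p v + phi G y v = 1 := congrFun hpq v
      rw [hpv, zero_add] at this
      rw [hyC, phi_ind] at this
      simp [oddNbhd, odd_iff_cast, this]
  · rintro ⟨C, hC, hB⟩
    have hyP : ind C ∈ P := by
      intro v hv
      have : v ∉ C := fun hvC => (Finset.mem_compl.mp (hC hvC)) hv
      simp [ind, this]
    have hphi : ∀ v ∈ B, phi G (ind C) v = 1 := by
      intro v hv
      have := hB hv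
      simp only [oddNbhd, Finset.mem_filter] at this
      rw [phi_ind, ← odd_iff_cast]
      exact this.2
    refine Submodule.mem_sup.mpr ⟨(fun _ => 1) - phi G (ind C), ?_, phi G (ind C),
      Submodule.mem_map_of_mem hyP, by abel⟩
    intro v hv
    simp [hphi v hv]
end

section
/- In the GSS scheme on a graph G, every c-accessing set B is authorised: there is a function of the shares {(k(i), c(i)) : i ∈ B} that equals the secret s for all keys k, namely B ↦ Σ_{i∈D} c(i) + Σ_{j∈Odd(D)} k(j) for any odd D ⊆ B with Odd(D) ⊆ B. -/
variable {V : Type*} [Fintype V] [DecidableEq V]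

def authorised (G : SimpleGraph V) [DecidableRel G.Adj] (B : Finset V) : Prop :=
  ∃ f : (B → ZMod 2 × ZMod 2) → ZMod 2,
    ∀ (s : ZMod 2) (k : V → ZMod 2),
      f (fun i => (k i.1, s + ∑ j ∈ G.neighborFinset i.1, k j)) = s

theorem cAccessing_authorised (G : SimpleGraph V) [DecidableRel G.Adj] (B : Finset V)
    (hB : cAccessing G B) : authorised G B := by
  obtain ⟨D, hDB, hDodd, hOdd⟩ := hB
  refine ⟨fun g => (∑ i ∈ B.attach, if i.1 ∈ D then (g i).2 else 0)
      + (∑ i ∈ B.attach, if i.1 ∈ oddNbhd G D then (g i).1 else 0), ?_⟩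
  intro s k
  simp only
  rw [Finset.sum_attach B (fun i => if i ∈ D then (s + ∑ j ∈ G.neighborFinset i, k j) else 0),
      Finset.sum_attach B (fun i => if i ∈ oddNbhd G D then k i else 0)]
  rw [Finset.sum_ite_mem, Finset.sum_ite_mem,
      Finset.inter_eq_right.mpr hDB, Finset.inter_eq_right.mpr hOdd]
  rw [Finset.sum_add_distrib]
  have hs : ∑ _i ∈ D, s = s := by
    rw [Finset.sum_const, nsmul_eq_mul]
    obtain ⟨m, hm⟩ := hDodd
    rw [hm]
    push_cast
    ring_nf
    simp [show ((2:ZMod 2) = 0) from rfl]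
  rw [hs, add_assoc]
  have h2 : (∑ i ∈ D, ∑ j ∈ G.neighborFinset i, k j) + ∑ j ∈ oddNbhd G D, k j = 0 := by
    have e1 : ∀ i, ∑ j ∈ G.neighborFinset i, k j
        = ∑ j : V, if j ∈ G.neighborFinset i then k j else 0 := by
      intro i
      rw [Finset.sum_ite_mem, Finset.univ_inter]
    have e2 : ∑ j ∈ oddNbhd G D, k j
        = ∑ j : V, if Odd (G.neighborFinset j ∩ D).card then k j else 0 := by
      rw [oddNbhd, Finset.sum_filter]
    rw [e2, Finset.sum_congr rfl (fun i _ => e1 i), Finset.sum_comm, ← Finset.sum_add_distrib]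
    apply Finset.sum_eq_zero
    intro j _
    have hfd : ∑ i ∈ D, (if j ∈ G.neighborFinset i then k j else 0)
        = ((G.neighborFinset j ∩ D).card : ZMod 2) * k j := by
      rw [← Finset.sum_filter]
      rw [Finset.sum_const, nsmul_eq_mul]
      congr 2
      apply Finset.card_bij (fun a _ => a)
      · intro a ha
        simp only [Finset.mem_filter, SimpleGraph.mem_neighborFinset] at ha
        simp [SimpleGraph.mem_neighborFinset, ha.1, ha.2.symm]
      · intro a _ b _ h; exact h
      · intro b hb
        simp only [Finset.mem_inter, SimpleGraph.mem_neighborFinset] at hb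
        exact ⟨b, Finset.mem_filter.mpr ⟨hb.2, by simp [SimpleGraph.mem_neighborFinset, hb.1.symm]⟩, rfl⟩
    rw [hfd]
    rcases Nat.even_or_odd (G.neighborFinset j ∩ D).card with he | ho
    · rw [if_neg (by simpa using he)]
      obtain ⟨m, hm⟩ := he
      rw [hm]; push_cast; ring_nf
      simp [show ((2:ZMod 2) = 0) from rfl]
    · rw [if_pos ho]
      obtain ⟨m, hm⟩ := ho
      rw [hm]; push_cast; ring_nf
      simp [show ((2:ZMod 2) = 0) from rfl]
  rw [h2, add_zero]
end

section
/- Privacy of GSS via a bijection on keys: let G be a finite simple graph, B ⊆ V not c-accessing, and let C ⊆ V \ B satisfy B ⊆ Odd(C). Then for every key assignment k : V → ZMod 2, the modified keys k' defined by k'(j) = k(j) + 1 for j ∈ C and k'(j) = k(j) otherwise, satisfy: k'(i) = k(i) for all i ∈ B, and the shares computed with secret s and keys k' restricted to B equal the shares computed with secret s+1 and keys k restricted to B. -/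
variable {V : Type*} [Fintype V] [DecidableEq V]

theorem gss_privacy_bijection (G : SimpleGraph V) [DecidableRel G.Adj] (B : Finset V)
    (hB : ¬ cAccessing G B) (C : Finset V) (hC : C ⊆ Bᶜ) (hOdd : B ⊆ oddNbhd G C)
    (s : ZMod 2) (k : V → ZMod 2) :
    let k' : V → ZMod 2 := fun j => if j ∈ C then k j + 1 else k j
    ∀ i ∈ B, k' i = k i ∧
      s + ∑ j ∈ G.neighborFinset i, k' j = (s + 1) + ∑ j ∈ G.neighborFinset i, k j := by
  intro k' i hi
  have hiC : i ∉ C := fun h => (Finset.mem_compl.mp (hC h)) hi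
  have hodd : Odd (G.neighborFinset i ∩ C).card := by
    have := hOdd hi
    simpa [oddNbhd] using this
  refine ⟨by simp [k', hiC], ?_⟩
  have h1 : ∀ j, k' j = k j + (if j ∈ C then (1 : ZMod 2) else 0) := by
    intro j; simp only [k']; split <;> simp
  have h2 : ∑ j ∈ G.neighborFinset i, k' j
      = ∑ j ∈ G.neighborFinset i, k j + ((G.neighborFinset i ∩ C).card : ZMod 2) := by
    simp only [h1, Finset.sum_add_distrib, Finset.sum_ite_mem,
      Finset.sum_const, nsmul_eq_mul, mul_one]
  obtain ⟨m, hm⟩ := hodd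
  rw [h2, hm]
  push_cast
  have h0 : (2 : ZMod 2) = 0 := rfl
  ring_nf
  rw [h0]
  ring
end

section
/- If B is not c-accessing in a finite simple graph G, then for each secret s ∈ ZMod 2 the map k ↦ (restriction to B of the shares (k(i), s + Σ_{j∈N(i)} k(j))) has the property that the distribution of B's shares under uniform random keys is identical for s = 0 and s = 1; concretely, there is a bijection φ on key assignments V → ZMod 2 such that shares_B(s, k) = shares_B(s+1, φ(k)) for all k. -/
variable {V : Type*} [Fintype V] [DecidableEq V]

private lemma zmod2_cast_one_iff (n : ℕ) : ((n : ZMod 2) = 1) ↔ Odd n := by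
  rw [Nat.odd_iff, ← ZMod.natCast_mod n 2]
  have h : n % 2 = 0 ∨ n % 2 = 1 := by omega
  rcases h with h | h <;> simp [h]

private lemma zmod2_cases (a : ZMod 2) : a = 0 ∨ a = 1 := by
  revert a; decide

private lemma dual_rep (φ : Module.Dual (ZMod 2) (V → ZMod 2)) (y : V → ZMod 2) :
    φ y = ∑ v, y v * φ (Pi.single v 1) := by
  conv_lhs => rw [← Finset.univ_sum_single y]
  rw [map_sum]
  refine Finset.sum_congr rfl fun v _ => ?_
  have h : Pi.single v (y v) = y v • (Pi.single v 1 : V → ZMod 2) := by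
    rw [← Pi.single_smul, smul_eq_mul, mul_one]
  rw [h, map_smul, smul_eq_mul]

private lemma sum_to_card (x : V → ZMod 2) (S : Finset V) :
    ∑ v ∈ S, x v = ((S.filter fun v => x v = 1).card : ZMod 2) := by
  rw [← Finset.sum_boole]
  refine Finset.sum_congr rfl fun v _ => ?_
  rcases zmod2_cases (x v) with h | h <;> simp [h]

theorem gss_privacy (G : SimpleGraph V) [DecidableRel G.Adj] (B : Finset V)
    (hB : ¬ cAccessing G B) (s : ZMod 2) :
    ∃ φ : (V → ZMod 2) ≃ (V → ZMod 2), ∀ k : V → ZMod 2, ∀ i ∈ B,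
      (k i, s + ∑ j ∈ G.neighborFinset i, k j)
        = (φ k i, (s + 1) + ∑ j ∈ G.neighborFinset i, φ k j) := by
  classical
  set f : (V → ZMod 2) →ₗ[ZMod 2] (V → ZMod 2) :=
    { toFun := fun d v => if v ∈ B then ∑ j ∈ G.neighborFinset v \ B, d j else 0
      map_add' := by
        intro a b; funext v; by_cases hv : v ∈ B <;> simp [hv, Finset.sum_add_distrib]
      map_smul' := by
        intro c a; funext v; by_cases hv : v ∈ B <;> simp [hv, Finset.mul_sum] } with hf
  set t : V → ZMod 2 := fun v => if v ∈ B then 1 else 0 with htdef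
  have ht : t ∈ LinearMap.range f := by
    rw [← Subspace.forall_mem_dualAnnihilator_apply_eq_zero_iff (LinearMap.range f) t]
    intro φ hφ
    rw [Submodule.mem_dualAnnihilator] at hφ
    have hφf : ∀ d, φ (f d) = 0 := fun d => hφ _ ⟨d, rfl⟩
    set x : V → ZMod 2 := fun v => φ (Pi.single v 1) with hx
    have key : ∀ u ∉ B, ∑ v ∈ G.neighborFinset u ∩ B, x v = 0 := by
      intro u hu
      have hg : ∀ v, f (Pi.single u 1) v
          = if v ∈ G.neighborFinset u ∩ B then (1 : ZMod 2) else 0 := by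
        intro v
        simp only [hf, LinearMap.coe_mk, AddHom.coe_mk]
        have hsum1 : ∑ j ∈ G.neighborFinset v \ B, Pi.single u (1 : ZMod 2) j
            = if u ∈ G.neighborFinset v \ B then 1 else 0 := by
          simp only [Pi.single_apply]
          exact Finset.sum_ite_eq' _ _ _
        by_cases hvB : v ∈ B
        · rw [if_pos hvB, hsum1]
          have hiff : (u ∈ G.neighborFinset v \ B) ↔ v ∈ G.neighborFinset u := by
            simp [Finset.mem_sdiff, SimpleGraph.mem_neighborFinset, hu, G.adj_comm]
          simp [Finset.mem_inter, hvB, hiff]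
        · simp [hvB, Finset.mem_inter]
      have hcalc : φ (f (Pi.single u 1)) = ∑ v ∈ G.neighborFinset u ∩ B, x v := by
        rw [dual_rep]
        calc ∑ v, f (Pi.single u 1) v * x v
            = ∑ v, (if v ∈ G.neighborFinset u ∩ B then x v else 0) := by
              refine Finset.sum_congr rfl fun v _ => ?_
              rw [hg v]; split <;> simp
          _ = ∑ v ∈ G.neighborFinset u ∩ B, x v := by
              rw [Finset.sum_ite_mem, Finset.univ_inter]
      rw [← hcalc]; exact hφf _
    set D : Finset V := B.filter (fun v => x v = 1) with hD
    have hDsub : D ⊆ B := Finset.filter_subset _ _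
    have hOddSub : oddNbhd G D ⊆ B := by
      intro v hv
      by_contra hvB
      rw [oddNbhd, Finset.mem_filter] at hv
      have hcard : ((G.neighborFinset v ∩ D).card : ZMod 2) = 1 :=
        (zmod2_cast_one_iff _).mpr hv.2
      have heq : G.neighborFinset v ∩ D
          = (G.neighborFinset v ∩ B).filter fun w => x w = 1 := by
        ext w
        simp only [hD, Finset.mem_filter, Finset.mem_inter]
        tauto
      rw [heq, ← sum_to_card, key v hvB] at hcard
      exact absurd hcard.symm one_ne_zero
    have hEven : ¬ Odd D.card := fun h => hB ⟨D, hDsub, h, hOddSub⟩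
    have hDcard : ((D.card : ZMod 2)) = 0 := by
      rcases zmod2_cases (D.card : ZMod 2) with h | h
      · exact h
      · exact absurd ((zmod2_cast_one_iff _).mp h) hEven
    rw [dual_rep]
    calc ∑ v, t v * x v = ∑ v, (if v ∈ B then x v else 0) := by
          refine Finset.sum_congr rfl fun v _ => ?_
          simp only [htdef]; split <;> simp
      _ = ∑ v ∈ B, x v := by rw [Finset.sum_ite_mem, Finset.univ_inter]
      _ = (D.card : ZMod 2) := sum_to_card x B
      _ = 0 := hDcard
  obtain ⟨d, hd⟩ := ht
  set d' : V → ZMod 2 := fun j => if j ∈ B then 0 else d j with hd'def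
  have hsum : ∀ i ∈ B, ∑ j ∈ G.neighborFinset i, d' j = 1 := by
    intro i hi
    have h1 : f d i = 1 := by rw [hd]; simp [htdef, hi]
    have h2 : ∑ j ∈ G.neighborFinset i, d' j = ∑ j ∈ G.neighborFinset i \ B, d j := by
      rw [Finset.sdiff_eq_filter, Finset.sum_filter]
      refine Finset.sum_congr rfl fun j _ => ?_
      by_cases hj : j ∈ B <;> simp [hd'def, hj]
    rw [h2]
    simpa [hf, hi] using h1
  refine ⟨Equiv.addRight d', fun k i hi => ?_⟩
  have hki : (Equiv.addRight d') k = k + d' := rfl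
  have hd'i : d' i = 0 := by simp [hd'def, hi]
  rw [hki]
  simp only [Prod.mk.injEq, Pi.add_apply]
  constructor
  · rw [hd'i, add_zero]
  · rw [Finset.sum_add_distrib, hsum i hi]
    have hr : (s + 1) + (∑ j ∈ G.neighborFinset i, k j + 1)
        = s + ∑ j ∈ G.neighborFinset i, k j + (1 + 1) := by ring
    rw [hr, show (1 : ZMod 2) + 1 = 0 by decide, add_zero]
end

section
/- Let G be a finite simple graph. A set B is c-accessing in both G and its complement graph Ḡ if and only if B is c-accessing in G and the complement set V \ B is not c-accessing in G. -/
variable {V : Type*} [Fintype V] [DecidableEq V]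

namespace CAccAux
open Matrix

lemma k2 : ∀ a : ZMod 2, a = 0 ∨ a = 1 := by decide

lemma odd_iff_cast (n : ℕ) : Odd n ↔ (n : ZMod 2) = 1 := by
  rw [Nat.odd_iff, ← ZMod.natCast_mod n 2]
  rcases Nat.mod_two_eq_zero_or_one n with h | h <;> rw [h] <;> decide

def chi (D : Finset V) : V → ZMod 2 := fun v => if v ∈ D then 1 else 0

def adjM (G : SimpleGraph V) [DecidableRel G.Adj] : Matrix V V (ZMod 2) :=
  Matrix.of fun v w => if G.Adj v w then 1 else 0

lemma mulVec_chi (G : SimpleGraph V) [DecidableRel G.Adj] (D : Finset V) (v : V) :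
    (adjM G *ᵥ chi D) v = ((G.neighborFinset v ∩ D).card : ZMod 2) := by
  have : G.neighborFinset v ∩ D = Finset.univ.filter fun w => G.Adj v w ∧ w ∈ D := by
    ext w; simp [SimpleGraph.mem_neighborFinset]
  rw [this]
  rw [Matrix.mulVec, dotProduct]
  rw [← Finset.sum_boole]
  apply Finset.sum_congr rfl
  intro w _
  simp only [adjM, chi, Matrix.of_apply]
  split_ifs <;> simp_all

lemma sum_chi (D : Finset V) : (∑ v, chi D v) = (D.card : ZMod 2) := by
  simp [chi, Finset.sum_boole, Finset.filter_mem_eq_inter]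


lemma mem_oddNbhd (G : SimpleGraph V) [DecidableRel G.Adj] (D : Finset V) (v : V) :
    v ∈ oddNbhd G D ↔ (adjM G *ᵥ chi D) v = 1 := by
  rw [oddNbhd, Finset.mem_filter, mulVec_chi, odd_iff_cast]
  simp

lemma cAccessing_iff (G : SimpleGraph V) [DecidableRel G.Adj] (B : Finset V) :
    cAccessing G B ↔ ∃ x : V → ZMod 2, (∀ v ∉ B, x v = 0) ∧ (∑ v, x v) = 1 ∧
      (∀ v ∉ B, (adjM G *ᵥ x) v = 0) := by
  constructor
  · rintro ⟨D, hDB, hodd, hsub⟩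
    refine ⟨chi D, fun v hv => ?_, ?_, fun v hv => ?_⟩
    · simp only [chi, if_neg (fun hD => hv (hDB hD))]
    · rw [sum_chi, ← odd_iff_cast]; exact hodd
    · have hv' : v ∉ oddNbhd G D := fun h => hv (hsub h)
      rw [mem_oddNbhd] at hv'
      rcases k2 ((adjM G *ᵥ chi D) v) with h | h
      · exact h
      · exact absurd h hv'
  · rintro ⟨x, hsupp, hsum, hodd⟩
    refine ⟨Finset.univ.filter (fun v => x v = 1), fun v hv => ?_, ?_, fun v hv => ?_⟩
    · by_contra hvB
      have := hsupp v hvB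
      simp_all
    all_goals
      have hx : chi (Finset.univ.filter (fun v => x v = 1)) = x := by
        funext w
        simp only [chi, Finset.mem_filter, Finset.mem_univ, true_and]
        rcases k2 (x w) with h | h <;> simp [h]
    · rw [odd_iff_cast, ← sum_chi, hx]; exact hsum
    · by_contra hvB
      rw [mem_oddNbhd, hx] at hv
      have := hodd v hvB
      simp_all

lemma adjM_compl (G : SimpleGraph V) [DecidableRel G.Adj] (v w : V) :
    adjM Gᶜ v w = adjM G v w + (if v = w then 0 else 1) := by
  simp only [adjM, Matrix.of_apply, SimpleGraph.compl_adj]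
  by_cases hvw : v = w
  · subst hvw; simp
  · by_cases hA : G.Adj v w <;> simp [hA, hvw] <;> decide

lemma mulVec_compl (G : SimpleGraph V) [DecidableRel G.Adj] (x : V → ZMod 2) (v : V) :
    (adjM Gᶜ *ᵥ x) v = (adjM G *ᵥ x) v + (∑ w, x w) + x v := by
  simp only [Matrix.mulVec, dotProduct]
  have h1 : ∀ w, adjM Gᶜ v w * x w
      = adjM G v w * x w + (x w + (if v = w then x w else 0)) := by
    intro w
    rw [adjM_compl, add_mul]
    congr 1
    split_ifs <;> ring_nf <;> simp [CharTwo.two_eq_zero]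
  calc ∑ w, adjM Gᶜ v w * x w
      = ∑ w, (adjM G v w * x w + (x w + if v = w then x w else 0)) :=
        Finset.sum_congr rfl (fun w _ => h1 w)
    _ = (∑ w, adjM G v w * x w) + ((∑ w, x w) + ∑ w, if v = w then x w else 0) := by
        rw [Finset.sum_add_distrib, Finset.sum_add_distrib]
    _ = (∑ w, adjM G v w * x w) + (∑ w, x w) + x v := by
        rw [Finset.sum_ite_eq]
        simp [add_assoc]

lemma cAccessing_compl_iff (G : SimpleGraph V) [DecidableRel G.Adj] (B : Finset V) :
    cAccessing Gᶜ B ↔ ∃ x : V → ZMod 2, (∀ v ∉ B, x v = 0) ∧ (∑ v, x v) = 1 ∧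
      (∀ v ∉ B, (adjM G *ᵥ x) v = 1) := by
  rw [cAccessing_iff]
  apply exists_congr
  intro x
  constructor
  · rintro ⟨hsupp, hsum, h⟩
    refine ⟨hsupp, hsum, fun v hv => ?_⟩
    have := h v hv
    rw [mulVec_compl, hsum, hsupp v hv, add_zero] at this
    rcases k2 ((adjM G *ᵥ x) v) with h0 | h1
    · rw [h0] at this; exact absurd this (by decide)
    · exact h1
  · rintro ⟨hsupp, hsum, h⟩
    refine ⟨hsupp, hsum, fun v hv => ?_⟩
    rw [mulVec_compl, hsum, hsupp v hv, add_zero, h v hv]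
    decide


def suppSub (B : Finset V) : Submodule (ZMod 2) (V → ZMod 2) where
  carrier := {x | ∀ v ∉ B, x v = 0}
  add_mem' := fun ha hb v hv => by simp [ha v hv, hb v hv]
  zero_mem' := fun v hv => rfl
  smul_mem' := fun c x hx v hv => by simp [hx v hv]

def restMap (M : Matrix V V (ZMod 2)) (B : Finset V) :
    (V → ZMod 2) →ₗ[ZMod 2] (V → ZMod 2) where
  toFun := fun x v => if v ∈ B then 0 else (M *ᵥ x) v
  map_add' := fun a b => by
    funext v
    simp only [Matrix.mulVec_add, Pi.add_apply]
    split_ifs <;> simp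
  map_smul' := fun c a => by
    funext v
    simp only [Matrix.mulVec_smul, Pi.smul_apply, RingHom.id_apply, smul_eq_mul]
    split_ifs <;> simp

@[simp] lemma restMap_apply (M : Matrix V V (ZMod 2)) (B : Finset V) (x : V → ZMod 2) (v : V) :
    restMap M B x v = if v ∈ B then 0 else (M *ᵥ x) v := rfl

theorem key (M : Matrix V V (ZMod 2)) (hsym : ∀ v w, M v w = M w v) (B : Finset V)
    (x₀ : V → ZMod 2) (hx₀s : ∀ v ∉ B, x₀ v = 0) (hx₀sum : (∑ v, x₀ v) = 1)
    (hx₀m : ∀ v ∉ B, (M *ᵥ x₀) v = 0) :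
    (∃ x : V → ZMod 2, (∀ v ∉ B, x v = 0) ∧ (∑ v, x v) = 1 ∧ ∀ v ∉ B, (M *ᵥ x) v = 1)
    ↔ ¬ (∃ y : V → ZMod 2, (∀ v ∈ B, y v = 0) ∧ (∑ v, y v) = 1 ∧
        ∀ v ∈ B, (M *ᵥ y) v = 0) := by
  constructor
  · rintro ⟨x, hxs, hxsum, hxm⟩ ⟨y, hys, hysum, hym⟩
    have h1 : ∑ v, y v * (M *ᵥ x) v = 1 := by
      rw [← hysum]
      apply Finset.sum_congr rfl
      intro v _
      by_cases hv : v ∈ B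
      · rw [hys v hv]; simp
      · rw [hxm v hv, mul_one]
    have h2 : ∑ v, y v * (M *ᵥ x) v = ∑ w, (M *ᵥ y) w * x w := by
      simp only [Matrix.mulVec, dotProduct, Finset.mul_sum, Finset.sum_mul]
      rw [Finset.sum_comm]
      apply Finset.sum_congr rfl; intro w _
      apply Finset.sum_congr rfl; intro v _
      rw [hsym v w]; ring
    have h3 : ∑ w, (M *ᵥ y) w * x w = 0 := by
      apply Finset.sum_eq_zero
      intro w _
      by_cases hw : w ∈ B
      · rw [hym w hw, zero_mul]
      · rw [hxs w hw, mul_zero]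
    rw [h2, h3] at h1
    exact absurd h1 (by decide)
  · intro hn
    by_contra hx
    apply hn
    have hgood : ¬ ∃ x : V → ZMod 2, (∀ v ∉ B, x v = 0) ∧ ∀ v ∉ B, (M *ᵥ x) v = 1 := by
      rintro ⟨x, hxs, hxm⟩
      rcases k2 (∑ v, x v) with h0 | h1
      · refine hx ⟨x + x₀, fun v hv => ?_, ?_, fun v hv => ?_⟩
        · simp [hxs v hv, hx₀s v hv]
        · simp only [Pi.add_apply]
          rw [Finset.sum_add_distrib, h0, hx₀sum, zero_add]
        · rw [Matrix.mulVec_add, Pi.add_apply, hxm v hv, hx₀m v hv, add_zero]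
      · exact hx ⟨x, hxs, h1, hxm⟩
    set U : Submodule (ZMod 2) (V → ZMod 2) := (suppSub B).map (restMap M B) with hU
    have hchi : chi Bᶜ ∉ U := by
      rintro ⟨x, hxW, hfx⟩
      refine hgood ⟨x, hxW, fun v hv => ?_⟩
      have h := congrFun hfx v
      rw [restMap_apply, if_neg hv] at h
      rw [h, chi, if_pos (Finset.mem_compl.mpr hv)]
    obtain ⟨φ, hφ1, hφ2⟩ := U.exists_dual_map_eq_bot_of_notMem hchi inferInstance
    have hφ0 : ∀ z ∈ U, φ z = 0 := fun z hz => by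
      have : φ z ∈ U.map φ := Submodule.mem_map_of_mem hz
      rwa [hφ2, Submodule.mem_bot] at this
    have hφchi : φ (chi Bᶜ) = 1 := (k2 _).resolve_left hφ1
    have hrep : ∀ z : V → ZMod 2, φ z = ∑ v, z v * φ (Pi.single v 1) := by
      intro z
      conv_lhs => rw [← Finset.univ_sum_single z]
      rw [map_sum]
      apply Finset.sum_congr rfl
      intro v _
      have hs : Pi.single v (z v) = z v • (Pi.single v 1 : V → ZMod 2) := by
        funext w
        simp only [Pi.single_apply, Pi.smul_apply, smul_eq_mul]
        split_ifs <;> simp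
      rw [hs, _root_.map_smul, smul_eq_mul]
    refine ⟨fun v => if v ∈ B then 0 else φ (Pi.single v 1),
      fun v hv => if_pos hv, ?_, ?_⟩
    · have e0 : (∑ v, (if v ∈ B then (0 : ZMod 2) else φ (Pi.single v 1)))
          = φ (chi Bᶜ) := by
        rw [hrep (chi Bᶜ)]
        apply Finset.sum_congr rfl
        intro v _
        by_cases hv : v ∈ B
        · have hc : chi Bᶜ v = 0 := by simp [chi, Finset.mem_compl, hv]
          rw [if_pos hv, hc, zero_mul]
        · have hc : chi Bᶜ v = 1 := by simp [chi, Finset.mem_compl, hv]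
          rw [if_neg hv, hc, one_mul]
      show (∑ v, (if v ∈ B then (0 : ZMod 2) else φ (Pi.single v 1))) = 1
      rw [e0, hφchi]
    · intro w hw
      have hmem : Pi.single w (1 : ZMod 2) ∈ suppSub B :=
        fun v hv => Pi.single_eq_of_ne (fun h => hv (by rw [h]; exact hw)) 1
      have e1 : (M *ᵥ (fun v => if v ∈ B then 0 else φ (Pi.single v 1))) w
          = ∑ v, (restMap M B) (Pi.single w 1) v * φ (Pi.single v 1) := by
        simp only [Matrix.mulVec, dotProduct]
        apply Finset.sum_congr rfl
        intro v _
        rw [restMap_apply]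
        by_cases hv : v ∈ B
        · simp only [if_pos hv, mul_zero, zero_mul]
        · simp only [if_neg hv, Matrix.mulVec_single_one, Matrix.col_apply, mul_one, hsym v w]
      rw [e1, ← hrep]
      exact hφ0 _ (Submodule.mem_map_of_mem hmem)

lemma compl_reformulate (G : SimpleGraph V) [DecidableRel G.Adj] (B : Finset V) :
    cAccessing G Bᶜ ↔ ∃ y : V → ZMod 2, (∀ v ∈ B, y v = 0) ∧ (∑ v, y v) = 1 ∧
      ∀ v ∈ B, (adjM G *ᵥ y) v = 0 := by
  rw [cAccessing_iff]
  simp only [Finset.mem_compl, not_not]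

lemma adjM_symm (G : SimpleGraph V) [DecidableRel G.Adj] :
    ∀ v w, adjM G v w = adjM G w v := by
  intro v w
  simp only [adjM, Matrix.of_apply]
  by_cases h : G.Adj v w
  · rw [if_pos h, if_pos (G.adj_symm h)]
  · rw [if_neg h, if_neg (fun h' => h (G.adj_symm h'))]

end CAccAux

theorem cAccessing_compl_graph_iff (G : SimpleGraph V) [DecidableRel G.Adj] (B : Finset V) :
    (cAccessing G B ∧ cAccessing Gᶜ B) ↔ (cAccessing G B ∧ ¬ cAccessing G Bᶜ) := by
  constructor
  · rintro ⟨h1, h2⟩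
    refine ⟨h1, ?_⟩
    obtain ⟨x₀, hs, hsum, hm⟩ := (CAccAux.cAccessing_iff G B).mp h1
    have hk := CAccAux.key (CAccAux.adjM G) (CAccAux.adjM_symm G) B x₀ hs hsum hm
    rw [CAccAux.compl_reformulate]
    exact hk.mp ((CAccAux.cAccessing_compl_iff G B).mp h2)
  · rintro ⟨h1, h2⟩
    refine ⟨h1, ?_⟩
    obtain ⟨x₀, hs, hsum, hm⟩ := (CAccAux.cAccessing_iff G B).mp h1
    have hk := CAccAux.key (CAccAux.adjM G) (CAccAux.adjM_symm G) B x₀ hs hsum hm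
    rw [CAccAux.cAccessing_compl_iff]
    exact hk.mpr (fun hy => h2 ((CAccAux.compl_reformulate G B).mpr hy))
end
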